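/- There exists a finite many-to-one matching market instance with contingent sibling priorities of absolute type — specifically with four schools, two levels, and four families each of size at most two, using a single tie-breaker at the family level — in which no contingent stable matching exists (i.e., every feasible matching is either wasteful or admits a student with contingent justified envy). -/

import Mathlib

open scoped Classical

/-- A many-to-one matching market with levels, families, priority groups and
random tie-breakers, as in "Stable Matching with Contingent Priorities". -/
structure Market where
  Student : Type
  School : Type
  Level : Type
  [instFinS : Fintype Student]
  [instDecS : DecidableEq Student]
  [instFinC : Fintype School]
  [instDecC : DecidableEq School]
  [instFinL : Fintype Level]
  [instDecL : DecidableEq Level]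
  level : Student → Level
  sameFamily : Student → Student → Prop
  fam_refl : ∀ s, sameFamily s s
  fam_symm : ∀ s s', sameFamily s s' → sameFamily s' s
  fam_trans : ∀ s s' s'', sameFamily s s' → sameFamily s' s'' → sameFamily s s''
  cap : School → Level → ℕ
  /-- strict preference of each student over schools plus the outside option `none` -/
  pref : Student → Option School → Option School → Prop
  pref_irrefl : ∀ s o, ¬ pref s o o
  pref_trans : ∀ s o₁ o₂ o₃, pref s o₁ o₂ → pref s o₂ o₃ → pref s o₁ o₃
  pref_total : ∀ s o o', o ≠ o' → pref s o o' ∨ pref s o' o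
  nGroups : ℕ
  nGroups_pos : 1 ≤ nGroups
  group : Student → School → ℕ
  group_pos : ∀ s c, 1 ≤ group s c
  group_le : ∀ s c, group s c ≤ nGroups
  /-- random tie-breakers (smaller is better) -/
  tb : Student → School → ℝ
  tb_distinct : ∀ c s s', s ≠ s' → tb s c ≠ tb s' c

attribute [instance] Market.instFinS Market.instDecS Market.instFinC
  Market.instDecC Market.instFinL Market.instDecL

namespace Market

variable (M : Market)

/-- `s` weakly prefers `o` to `o'`. -/
def wPref (s : M.Student) (o o' : Option M.School) : Prop :=
  o = o' ∨ M.pref s o o'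

/-- A feasible matching: every assigned student finds their school acceptable and the
school offers seats at their level, and per-level capacities are respected. -/
def IsMatching (μ : M.Student → Option M.School) : Prop :=
  (∀ s c, μ s = some c → M.pref s (some c) none ∧ 0 < M.cap c (M.level s)) ∧
  (∀ c ℓ, (Finset.univ.filter fun s => μ s = some c ∧ M.level s = ℓ).card ≤ M.cap c ℓ)

/-- Number of students of level `ℓ` assigned to `c`. -/
noncomputable def assignedCount (μ : M.Student → Option M.School) (c : M.School)
    (ℓ : M.Level) : ℕ :=
  (Finset.univ.filter fun s => μ s = some c ∧ M.level s = ℓ).card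

/-- Non-wastefulness. -/
def NonWasteful (μ : M.Student → Option M.School) : Prop :=
  ¬ ∃ s c, M.pref s (some c) (μ s) ∧
    M.assignedCount μ c (M.level s) < M.cap c (M.level s)

/-- Initial priority order at school `c` (groups first, tie-breakers second). -/
def initPrio (c : M.School) (s s' : M.Student) : Prop :=
  M.group s c < M.group s' c ∨ (M.group s c = M.group s' c ∧ M.tb s c < M.tb s' c)

/-- Initial stability. -/
def InitStable (μ : M.Student → Option M.School) : Prop :=
  M.IsMatching μ ∧ M.NonWasteful μ ∧
  ¬ ∃ s s' c, μ s' = some c ∧ M.level s = M.level s' ∧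
      M.pref s (some c) (μ s) ∧ M.initPrio c s s'

/-- Number of students of `s`'s level with strictly higher initial priority at `c`
who weakly prefer `c` to their match. -/
noncomputable def rivalCount (μ : M.Student → Option M.School) (s : M.Student)
    (c : M.School) : ℕ :=
  (Finset.univ.filter fun s'' => M.level s'' = M.level s ∧ M.initPrio c s'' s ∧
    M.wPref s'' (some c) (μ s'')).card

/-- `s` provides contingent priority at `c` (Definition 2, refined). -/
def Provides (μ : M.Student → Option M.School) (s : M.Student) (c : M.School) : Prop :=
  μ s = some c ∧
  (∃ s', s' ≠ s ∧ M.sameFamily s s' ∧ M.wPref s' (some c) (μ s')) ∧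
  M.rivalCount μ s c < M.cap c (M.level s)

/-- `s` is the effective priority provider of their family at `c`: the provider with
the most favorable tie-breaker. -/
def EffProvider (μ : M.Student → Option M.School) (s : M.Student) (c : M.School) : Prop :=
  M.Provides μ s c ∧
  ∀ s', s' ≠ s → M.sameFamily s s' → M.Provides μ s' c → M.tb s c < M.tb s' c

/-- Contingent group under absolute priorities. -/
noncomputable def absGroup (μ : M.Student → Option M.School) (s : M.Student)
    (c : M.School) : ℕ :=
  if M.group s c < M.nGroups ∨
      (M.EffProvider μ s c ∧ ∃ s', s' ≠ s ∧ M.sameFamily s s' ∧ μ s' = some c) ∨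
      (∃ s', s' ≠ s ∧ M.sameFamily s s' ∧ M.EffProvider μ s' c)
  then M.group s c else M.nGroups + 1

/-- Contingent priority order under absolute priorities. -/
noncomputable def absPrio (μ : M.Student → Option M.School) (c : M.School)
    (s s' : M.Student) : Prop :=
  M.absGroup μ s c < M.absGroup μ s' c ∨
  (M.absGroup μ s c = M.absGroup μ s' c ∧ M.tb s c < M.tb s' c)

/-- Contingent stability under absolute priorities. -/
def AbsStable (μ : M.Student → Option M.School) : Prop :=
  M.IsMatching μ ∧ M.NonWasteful μ ∧
  ¬ ∃ s s' c, μ s' = some c ∧ M.level s = M.level s' ∧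
      M.pref s (some c) (μ s) ∧ M.absPrio μ c s s'

/-- Contingent tie-breaker under partial priorities: a no-priority student inherits
their effective provider's tie-breaker when it is more favorable. -/
noncomputable def partialTb (μ : M.Student → Option M.School) (s : M.Student)
    (c : M.School) : ℝ :=
  if h : M.group s c = M.nGroups ∧ ¬ M.EffProvider μ s c ∧
      ∃ s', s' ≠ s ∧ M.sameFamily s s' ∧ M.EffProvider μ s' c ∧ M.tb s' c < M.tb s c
  then M.tb h.2.2.choose c
  else M.tb s c

/-- Contingent priority order under partial priorities: groups unchanged, contingent
tie-breakers first, with residual ties (within a family) broken by the initial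
tie-breakers (the ε-perturbation of Definition 5). -/
noncomputable def partialPrio (μ : M.Student → Option M.School) (c : M.School)
    (s s' : M.Student) : Prop :=
  M.group s c < M.group s' c ∨
  (M.group s c = M.group s' c ∧
    (M.partialTb μ s c < M.partialTb μ s' c ∨
      (M.partialTb μ s c = M.partialTb μ s' c ∧ M.tb s c < M.tb s' c)))

/-- Contingent stability under partial priorities. -/
def PartialStable (μ : M.Student → Option M.School) : Prop :=
  M.IsMatching μ ∧ M.NonWasteful μ ∧
  ¬ ∃ s s' c, μ s' = some c ∧ M.level s = M.level s' ∧
      M.pref s (some c) (μ s) ∧ M.partialPrio μ c s s'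

/-- Tie-breakers are at the family level: members of a family compare the same way
against any student outside the family. -/
def FamilyTB : Prop :=
  ∀ c (s s' a : M.Student), M.sameFamily s s' → ¬ M.sameFamily s a →
    (M.tb s c < M.tb a c ↔ M.tb s' c < M.tb a c)

/-- Size of the family of `s`. -/
noncomputable def famSize (s : M.Student) : ℕ :=
  (Finset.univ.filter fun s' => M.sameFamily s s').card

/-- Number of families in the market. -/
noncomputable def numFamilies : ℕ :=
  (Finset.univ.image fun s : M.Student =>
    Finset.univ.filter fun s' => M.sameFamily s s').card

/-- Rank of an outcome in a student's preference list (`none` gets rank `|≻ₛ|+1`,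
the penalty for being unassigned). -/
noncomputable def rankVal (s : M.Student) (o : Option M.School) : ℕ :=
  (Finset.univ.filter fun c : M.School => M.pref s (some c) o).card + 1

/-- Total rank objective of a matching. -/
noncomputable def cost (μ : M.Student → Option M.School) : ℕ :=
  ∑ s, M.rankVal s (μ s)

/-- Rank-optimal contingent stable matching under absolute priorities. -/
def RankOptAbs (μ : M.Student → Option M.School) : Prop :=
  M.AbsStable μ ∧ ∀ μ', M.AbsStable μ' → M.cost μ ≤ M.cost μ'

/-- Rank-optimal contingent stable matching under partial priorities. -/
def RankOptPartial (μ : M.Student → Option M.School) : Prop :=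
  M.PartialStable μ ∧ ∀ μ', M.PartialStable μ' → M.cost μ ≤ M.cost μ'

end Market

namespace Cex

abbrev Stu := Fin 6
abbrev Sch := Fin 4

def fam : Stu → Fin 4 := ![0,0,1,1,2,3]
def lvl : Stu → Fin 2 := ![0,1,0,1,0,1]
def t : Stu → ℕ := ![30,31,10,11,0,20]
def capf : Sch → Fin 2 → ℕ := ![![1,1],![1,0],![1,0],![1,2]]
def rkS : Stu → Sch → ℕ := ![![0,2,3,4],![0,1,2,4],![3,4,1,0],![1,0,3,2],![1,2,4,0],![3,2,4,0]]
def rkN : Stu → ℕ := ![1,3,2,4,3,1]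
def rk (s : Stu) (o : Option Sch) : ℕ := o.elim (rkN s) (rkS s)

abbrev prefP (s : Stu) (o o' : Option Sch) : Prop := rk s o < rk s o'
abbrev wP (s : Stu) (o o' : Option Sch) : Prop := o = o' ∨ prefP s o o'
def countP (μ : Stu → Option Sch) (c : Sch) (l : Fin 2) : ℕ :=
  (Finset.univ.filter fun s => μ s = some c ∧ lvl s = l).card
abbrev initP (_c : Sch) (s s' : Stu) : Prop := (1:ℕ) < 1 ∨ ((1:ℕ) = 1 ∧ t s < t s')
def rivalP (μ : Stu → Option Sch) (s : Stu) (c : Sch) : ℕ :=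
  (Finset.univ.filter fun s'' => lvl s'' = lvl s ∧ initP c s'' s ∧ wP s'' (some c) (μ s'')).card
abbrev providesP (μ : Stu → Option Sch) (s : Stu) (c : Sch) : Prop :=
  μ s = some c ∧ (∃ s', s' ≠ s ∧ fam s = fam s' ∧ wP s' (some c) (μ s')) ∧
    rivalP μ s c < capf c (lvl s)
abbrev effP (μ : Stu → Option Sch) (s : Stu) (c : Sch) : Prop :=
  providesP μ s c ∧ ∀ s', s' ≠ s → fam s = fam s' → providesP μ s' c → t s < t s'
set_option synthInstance.maxSize 2000 in
set_option maxHeartbeats 1000000 in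
def absGroupP (μ : Stu → Option Sch) (s : Stu) (c : Sch) : ℕ :=
  if (1:ℕ) < 1 ∨ (effP μ s c ∧ ∃ s', s' ≠ s ∧ fam s = fam s' ∧ μ s' = some c) ∨
      (∃ s', s' ≠ s ∧ fam s = fam s' ∧ effP μ s' c)
  then 1 else 2
abbrev absPrioP (μ : Stu → Option Sch) (c : Sch) (s s' : Stu) : Prop :=
  absGroupP μ s c < absGroupP μ s' c ∨ (absGroupP μ s c = absGroupP μ s' c ∧ t s < t s')
abbrev envyP (μ : Stu → Option Sch) : Prop :=
  ∃ s s' c, μ s' = some c ∧ lvl s = lvl s' ∧ prefP s (some c) (μ s) ∧ absPrioP μ c s s'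
abbrev wasteP (μ : Stu → Option Sch) : Prop :=
  ∃ s c, prefP s (some c) (μ s) ∧ countP μ c (lvl s) < capf c (lvl s)
abbrev overP (μ : Stu → Option Sch) : Prop := ∃ c l, capf c l < countP μ c l

def allowedL : Stu → List (Option Sch) :=
  ![[some 0, none], [some 0, none], [some 3, some 2, none], [some 0, some 3, none],
    [some 3, some 0, some 1, none], [some 3, none]]

set_option maxHeartbeats 8000000 in
set_option maxRecDepth 100000 in
theorem key : ∀ v : (∀ s : Stu, Fin (allowedL s).length),
    overP (fun s => (allowedL s).get (v s)) ∨ wasteP (fun s => (allowedL s).get (v s)) ∨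
      envyP (fun s => (allowedL s).get (v s)) := by decide

noncomputable def M₀ : Market where
  Student := Stu
  School := Sch
  Level := Fin 2
  level := lvl
  sameFamily s s' := fam s = fam s'
  fam_refl _ := rfl
  fam_symm _ _ h := h.symm
  fam_trans _ _ _ h h' := h.trans h'
  cap := capf
  pref := prefP
  pref_irrefl _ _ := Nat.lt_irrefl _
  pref_trans _ _ _ _ := Nat.lt_trans
  pref_total := by decide
  nGroups := 1
  nGroups_pos := le_refl 1
  group _ _ := 1
  group_pos _ _ := le_refl 1
  group_le _ _ := le_refl 1
  tb s _ := (t s : ℝ)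
  tb_distinct := by
    intro c s s' hne h
    exact (show ∀ s s' : Stu, s ≠ s' → t s ≠ t s' by decide) s s' hne (Nat.cast_injective h)

lemma filter_ext {α : Type*} (p q : α → Prop) {_ : DecidablePred p} {_ : DecidablePred q}
    (s : Finset α) (h : ∀ a, p a ↔ q a) : s.filter p = s.filter q := by
  ext a
  simp only [Finset.mem_filter]
  exact and_congr Iff.rfl (h a)

lemma tb_lt (s s' : Stu) (c : Sch) : M₀.tb s c < M₀.tb s' c ↔ t s < t s' := Nat.cast_lt

lemma count_eq (μ : Stu → Option Sch) (c : Sch) (l : Fin 2) :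
    M₀.assignedCount μ c l = countP μ c l :=
  congrArg Finset.card (filter_ext _ _ _ fun _ => Iff.rfl)

lemma initPrio_iff (c : Sch) (s s' : Stu) : M₀.initPrio c s s' ↔ initP c s s' :=
  or_congr Iff.rfl (and_congr Iff.rfl (tb_lt s s' c))

lemma rival_eq (μ : Stu → Option Sch) (s : Stu) (c : Sch) :
    M₀.rivalCount μ s c = rivalP μ s c :=
  congrArg Finset.card (filter_ext _ _ _ fun a =>
    and_congr Iff.rfl (and_congr (initPrio_iff c a s) Iff.rfl))

lemma provides_iff (μ : Stu → Option Sch) (s : Stu) (c : Sch) :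
    M₀.Provides μ s c ↔ providesP μ s c :=
  and_congr Iff.rfl (and_congr Iff.rfl (by rw [rival_eq]; exact Iff.rfl))

lemma eff_iff (μ : Stu → Option Sch) (s : Stu) (c : Sch) :
    M₀.EffProvider μ s c ↔ effP μ s c :=
  and_congr (provides_iff μ s c) (forall_congr' fun s' =>
    imp_congr Iff.rfl (imp_congr Iff.rfl (imp_congr (provides_iff μ s' c) (tb_lt s s' c))))

lemma absGroup_eq (μ : Stu → Option Sch) (s : Stu) (c : Sch) :
    M₀.absGroup μ s c = absGroupP μ s c := by
  have hiff : (M₀.group s c < M₀.nGroups ∨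
      (M₀.EffProvider μ s c ∧ ∃ s', s' ≠ s ∧ M₀.sameFamily s s' ∧ μ s' = some c) ∨
      (∃ s', s' ≠ s ∧ M₀.sameFamily s s' ∧ M₀.EffProvider μ s' c)) ↔
      ((1:ℕ) < 1 ∨ (effP μ s c ∧ ∃ s', s' ≠ s ∧ fam s = fam s' ∧ μ s' = some c) ∨
      (∃ s', s' ≠ s ∧ fam s = fam s' ∧ effP μ s' c)) :=
    or_congr Iff.rfl (or_congr (and_congr (eff_iff μ s c) Iff.rfl)
      (exists_congr fun s' => and_congr Iff.rfl (and_congr Iff.rfl (eff_iff μ s' c))))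
  by_cases h : ((1:ℕ) < 1 ∨ (effP μ s c ∧ ∃ s', s' ≠ s ∧ fam s = fam s' ∧ μ s' = some c) ∨
      (∃ s', s' ≠ s ∧ fam s = fam s' ∧ effP μ s' c))
  · exact (if_pos (hiff.mpr h) : M₀.absGroup μ s c = M₀.group s c).trans
      (if_pos h : absGroupP μ s c = 1).symm
  · exact (if_neg (fun hc => h (hiff.mp hc)) : M₀.absGroup μ s c = M₀.nGroups + 1).trans
      (if_neg h : absGroupP μ s c = 2).symm

lemma absPrio_iff (μ : Stu → Option Sch) (c : Sch) (s s' : Stu) :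
    M₀.absPrio μ c s s' ↔ absPrioP μ c s s' := by
  unfold Market.absPrio
  rw [absGroup_eq, absGroup_eq]
  exact or_congr Iff.rfl (and_congr Iff.rfl (tb_lt s s' c))

end Cex

/-- There exists a finite market with contingent sibling priorities of
absolute type — four schools, two levels, four families each of size at most two,
with a single tie-breaker at the family level — in which no contingent stable
matching under absolute priorities exists. -/
theorem no_abs_stable_exists :
    ∃ M : Market,
      Fintype.card M.School = 4 ∧
      Fintype.card M.Level = 2 ∧
      M.numFamilies = 4 ∧
      (∀ s, M.famSize s ≤ 2) ∧
      (∀ s c c', M.tb s c = M.tb s c') ∧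
      M.FamilyTB ∧
      ¬ ∃ μ : M.Student → Option M.School, M.AbsStable μ := by
  classical
  refine ⟨Cex.M₀, ?_, ?_, ?_, ?_, ?_, ?_, ?_⟩
  · rfl
  · rfl
  · -- numFamilies = 4
    have h : (fun s : Cex.Stu => Finset.univ.filter fun s' => Cex.M₀.sameFamily s s')
        = (fun s : Cex.Stu => Finset.univ.filter fun s' => Cex.fam s = Cex.fam s') :=
      funext fun s => Cex.filter_ext _ _ _ fun _ => Iff.rfl
    exact (congrArg Finset.card (congrArg (fun f => Finset.image f Finset.univ) h)).trans
      (by decide)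
  · -- famSize ≤ 2
    intro s
    have h : (Finset.univ.filter fun s' => Cex.M₀.sameFamily s s')
        = Finset.univ.filter fun s' => Cex.fam s = Cex.fam s' :=
      Cex.filter_ext _ _ _ fun _ => Iff.rfl
    exact le_of_eq_of_le (congrArg Finset.card h)
      ((show ∀ s : Cex.Stu,
          (Finset.univ.filter fun s' => Cex.fam s = Cex.fam s').card ≤ 2 by decide) s)
  · exact fun _ _ _ => rfl
  · -- FamilyTB
    intro c s s' a hss' hsa
    rw [Cex.tb_lt s a c, Cex.tb_lt s' a c]
    exact (show ∀ s s' a : Cex.Stu, Cex.fam s = Cex.fam s' → ¬ Cex.fam s = Cex.fam a →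
        (Cex.t s < Cex.t a ↔ Cex.t s' < Cex.t a) by decide) s s' a hss' hsa
  · rintro ⟨μ, hM, hNW, hNE⟩
    have hall : ∀ s : Cex.Stu, μ s ∈ Cex.allowedL s := by
      intro s
      cases h : μ s with
      | none => exact (show ∀ s : Cex.Stu, (none : Option Cex.Sch) ∈ Cex.allowedL s by decide) s
      | some c =>
        exact (show ∀ (s : Cex.Stu) (c : Cex.Sch),
            Cex.rk s (some c) < Cex.rk s none → 0 < Cex.capf c (Cex.lvl s) →
            some c ∈ Cex.allowedL s by decide) s c (hM.1 s c h).1 (hM.1 s c h).2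
    have hv : ∀ s : Cex.Stu,
        ∃ i : Fin (Cex.allowedL s).length, (Cex.allowedL s).get i = μ s :=
      fun s => List.mem_iff_get.mp (hall s)
    choose v hv' using hv
    have hfun : (fun s => (Cex.allowedL s).get (v s)) = μ := funext hv'
    rcases Cex.key v with h | h | h
    · rw [hfun] at h
      obtain ⟨c, l, hc⟩ := h
      have e : (Finset.univ.filter fun s => μ s = some c ∧ Cex.M₀.level s = l).card
          = Cex.countP μ c l :=
        congrArg Finset.card (Cex.filter_ext _ _ _ fun _ => Iff.rfl)
      exact absurd (le_of_eq_of_le e.symm (by convert hM.2 c l <;> rfl)) (not_le.mpr hc)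
    · rw [hfun] at h
      obtain ⟨s, c, h1, h2⟩ := h
      exact hNW ⟨s, c, h1, lt_of_eq_of_lt (Cex.count_eq μ c (Cex.lvl s)) h2⟩
    · rw [hfun] at h
      obtain ⟨s, s', c, h1, h2, h3, h4⟩ := h
      exact hNE ⟨s, s', c, h1, h2, h3, (Cex.absPrio_iff μ c s s').mpr h4⟩
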